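/- Let F^λ[G] be a twisted group algebra of characteristic p > 0 such that either F^λ[G]^[m] = 0 (lower Lie nilpotent) or F^λ[G]^(m) = 0 (upper Lie nilpotent). If p^t ≥ m, then for every b ∈ G the element b^{p^t} is central in G, and moreover λ(a, b^{p^t}) = λ(b^{p^t}, a) for all a ∈ G. -/

import Mathlib

/-- Additive subgroup generated by products `s * t` with `s ∈ S`, `t ∈ T`. -/
def aprod {R : Type*} [NonUnitalRing R] (S T : AddSubgroup R) : AddSubgroup R :=
  AddSubgroup.closure {x : R | ∃ s ∈ S, ∃ t ∈ T, x = s * t}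

/-- Additive subgroup generated by Lie commutators `s*t - t*s`. -/
def lbrk {R : Type*} [NonUnitalRing R] (S T : AddSubgroup R) : AddSubgroup R :=
  AddSubgroup.closure {x : R | ∃ s ∈ S, ∃ t ∈ T, x = s * t - t * s}

/-- The lower Lie central series `γ₁(R) = R`, `γₙ(R) = [γₙ₋₁(R), R]`. -/
def lieGamma (R : Type*) [NonUnitalRing R] : ℕ → AddSubgroup R
  | 0 => ⊤
  | 1 => ⊤
  | n + 2 => lbrk (lieGamma R (n + 1)) ⊤

/-- The `n`-th lower Lie power `R^[n] = γₙ(R)·R`. -/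
def lowerLiePow (R : Type*) [NonUnitalRing R] (n : ℕ) : AddSubgroup R :=
  aprod (lieGamma R n) ⊤

/-- The `n`-th upper Lie power: `R^(1) = R`, `R^(n) = [R^(n-1), R]·R`. -/
def upperLiePow (R : Type*) [NonUnitalRing R] : ℕ → AddSubgroup R
  | 0 => ⊤
  | 1 => ⊤
  | n + 2 => aprod (lbrk (upperLiePow R (n + 1)) ⊤) ⊤

/-- If a twisted group algebra of characteristic `p` satisfies `A^[m] = 0` or
`A^(m) = 0` and `pᵗ ≥ m`, then `b^{pᵗ}` is central in `G` for every `b`, and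
`λ(a, b^{pᵗ}) = λ(b^{pᵗ}, a)` for all `a`. -/
lemma lbrk_mono {R : Type*} [NonUnitalRing R] {S S' T : AddSubgroup R} (h : S ≤ S') :
    lbrk S T ≤ lbrk S' T :=
  AddSubgroup.closure_mono (fun x ⟨s, hs, t, ht, hx⟩ => ⟨s, h hs, t, ht, hx⟩)

lemma le_aprod {R : Type*} [Ring R] (S : AddSubgroup R) : S ≤ aprod S ⊤ := fun s hs =>
  AddSubgroup.subset_closure ⟨s, hs, 1, trivial, (mul_one s).symm⟩

lemma gamma_succ_le (R : Type*) [NonUnitalRing R] : ∀ n, lieGamma R (n + 2) ≤ lieGamma R (n + 1)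
  | 0 => le_top
  | n + 1 => lbrk_mono (gamma_succ_le R n)

lemma gamma_le_of_le (R : Type*) [NonUnitalRing R] {n k : ℕ} (h : n + 1 ≤ k) :
    lieGamma R k ≤ lieGamma R (n + 1) := by
  induction k with
  | zero => omega
  | succ k ih =>
    rcases Nat.lt_or_ge (n + 1) (k + 1) with h' | h'
    · have hk : 1 ≤ k := by omega
      obtain ⟨j, rfl⟩ : ∃ j, k = j + 1 := ⟨k - 1, by omega⟩
      exact le_trans (gamma_succ_le R j) (ih (by omega))
    · have : n + 1 = k + 1 := le_antisymm h h'
      rw [this]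

lemma gamma_le_upper (R : Type*) [Ring R] : ∀ n, lieGamma R n ≤ upperLiePow R n
  | 0 => le_top
  | 1 => le_top
  | n + 2 =>
    le_trans (lbrk_mono (gamma_le_upper R (n + 1)) : lieGamma R (n + 2) ≤ _)
      (le_aprod _)

lemma adpow_mem {F A : Type*} [Field F] [Ring A] [Algebra F A] (y : A) :
    ∀ (k : ℕ) (x : A),
      ((LinearMap.mulLeft F y - LinearMap.mulRight F y) ^ k) x ∈ lieGamma A (k + 1)
  | 0, x => by rw [pow_zero, Module.End.one_apply]; exact AddSubgroup.mem_top _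
  | k + 1, x => by
    have hz := adpow_mem (F := F) y k x
    set z := ((LinearMap.mulLeft F y - LinearMap.mulRight F y) ^ k) x with hzdef
    have : ((LinearMap.mulLeft F y - LinearMap.mulRight F y) ^ (k + 1)) x
        = y * z - z * y := by
      rw [pow_succ', Module.End.mul_apply, ← hzdef, LinearMap.sub_apply,
        LinearMap.mulLeft_apply, LinearMap.mulRight_apply]
    rw [this]
    have h1 : z * y - y * z ∈ lieGamma A (k + 2) :=
      AddSubgroup.subset_closure ⟨z, hz, y, trivial, rfl⟩
    have := neg_mem h1
    rwa [neg_sub] at this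
theorem stmt_11 {F : Type*} [Field F] {G : Type*} [Group G]
    {A : Type*} [Ring A] [Algebra F A]
    (l : G → G → Fˣ) (B : Module.Basis G F A)
    (hone : B 1 = 1)
    (hmul : ∀ g h : G, B g * B h = ((l g h : F)) • B (g * h))
    (hcoc : ∀ a b c : G, l a (b * c) * l b c = l (a * b) c * l a b)
    (hnorm : ∀ g : G, l g 1 = 1 ∧ l 1 g = 1)
    (p : ℕ) [Fact p.Prime] [CharP F p]
    (m t : ℕ) (hLie : lowerLiePow A m = ⊥ ∨ upperLiePow A m = ⊥)
    (hmt : m ≤ p ^ t) :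
    ∀ b : G, (∀ a : G, a * b ^ p ^ t = b ^ p ^ t * a) ∧
      (∀ a : G, l a (b ^ p ^ t) = l (b ^ p ^ t) a) := by
  have hB1 : (B 1 : A) ≠ 0 := B.ne_zero 1
  haveI hnt : Nontrivial A := ⟨⟨1, 0, by rw [← hone]; exact hB1⟩⟩
  have hinj : Function.Injective (algebraMap F A) := (algebraMap F A).injective
  haveI hchA : CharP A p := charP_of_injective_algebraMap hinj p
  haveI hchE : CharP (A →ₗ[F] A) p := Module.charP_end ⟨(1 : A), (Submodule.eq_bot_iff _).mpr fun r hr => by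
    rw [Ideal.mem_torsionOf_iff] at hr
    rw [← map_zero (algebraMap F A)] at hr
    exact hinj (by rwa [Algebra.algebraMap_eq_smul_one])⟩
  have hg : lieGamma A m ≤ ⊥ := by
    rcases hLie with h | h
    · rw [← h]; exact le_aprod _
    · rw [← h]; exact gamma_le_upper A m
  obtain ⟨n, rfl⟩ : ∃ n, m = n + 1 := by
    cases m with
    | zero =>
      exfalso
      have h1 : (1 : A) ∈ lieGamma A 0 := AddSubgroup.mem_top _
      exact one_ne_zero (AddSubgroup.mem_bot.mp (hg h1))
    | succ n => exact ⟨n, rfl⟩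
  have hgz : ∀ x : A, x ∈ lieGamma A (p ^ t + 1) → x = 0 := fun x hx =>
    AddSubgroup.mem_bot.mp (hg (gamma_le_of_le A (by omega) hx))
  have key : ∀ y x : A, y ^ p ^ t * x = x * y ^ p ^ t := by
    intro y x
    have h1 := adpow_mem (F := F) y (p ^ t) x
    have h2 : (LinearMap.mulLeft F y - LinearMap.mulRight F y) ^ p ^ t
        = LinearMap.mulLeft F (y ^ p ^ t) - LinearMap.mulRight F (y ^ p ^ t) := by
      rw [sub_pow_char_pow_of_commute p t (LinearMap.commute_mulLeft_right y y),
        LinearMap.pow_mulLeft, LinearMap.pow_mulRight]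
    rw [h2] at h1
    have h3 := hgz _ h1
    rwa [LinearMap.sub_apply, LinearMap.mulLeft_apply, LinearMap.mulRight_apply,
      sub_eq_zero] at h3
  have huniq : ∀ (g h : G) (c d : F), c ≠ 0 → c • B g = d • B h → g = h ∧ c = d := by
    intro g h c d hc he
    have h1 := congrArg B.repr he
    rw [map_smul, map_smul, B.repr_self, B.repr_self, Finsupp.smul_single,
      Finsupp.smul_single, smul_eq_mul, mul_one, smul_eq_mul, mul_one] at h1
    rcases (Finsupp.single_eq_single_iff _ _ _ _).mp h1 with ⟨hg, hcd⟩ | ⟨h0, _⟩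
    · exact ⟨hg, hcd⟩
    · exact absurd h0 hc
  have hpow : ∀ (b : G) (n : ℕ), ∃ c : F, c ≠ 0 ∧ (B b) ^ n = c • B (b ^ n) := by
    intro b n
    induction n with
    | zero => exact ⟨1, one_ne_zero, by rw [pow_zero, pow_zero, hone, one_smul]⟩
    | succ n ih =>
      obtain ⟨c, hc, hcb⟩ := ih
      refine ⟨c * (l (b ^ n) b : F), mul_ne_zero hc (Units.ne_zero _), ?_⟩
      rw [pow_succ, hcb, smul_mul_assoc, hmul, pow_succ, smul_smul]
  intro b
  obtain ⟨c, hc, hcb⟩ := hpow b (p ^ t)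
  have main : ∀ a : G, a * b ^ p ^ t = b ^ p ^ t * a ∧
      (l a (b ^ p ^ t) : F) = (l (b ^ p ^ t) a : F) := by
    intro a
    have h1 := key (B b) (B a)
    rw [hcb, smul_mul_assoc, mul_smul_comm] at h1
    have h2 := congrArg (c⁻¹ • ·) h1
    simp only [inv_smul_smul₀ hc] at h2
    rw [hmul, hmul] at h2
    obtain ⟨hgh, hcd⟩ := huniq _ _ _ _ (Units.ne_zero _) h2
    exact ⟨hgh.symm, hcd.symm⟩
  exact ⟨fun a => (main a).1, fun a => Units.ext ((main a).2)⟩
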